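/- Let K be a field with char K ∤ n, containing μ_n(K) and a root of T^4 + 4. Let f ∈ K×, and let d be the maximal divisor of n such that T^d − f has a root g in K, with n = d·n'. Then T^n − f = ∏_{ζ ∈ μ_d(K)} (T^{n'} − ζg) is the factorization of T^n − f into distinct irreducible factors in K[T]. -/

import Mathlib

open Polynomial

/-- If `K` contains a primitive `m`-th root of unity and `a ≠ 0` is not a `p`-th power
for any prime `p ∣ m`, then `X ^ m - C a` is irreducible. -/
theorem aux_X_pow_sub_C_irreducible {K : Type*} [Field K] {m : ℕ} (hm : 0 < m)
    {ζ : K} (hζ : IsPrimitiveRoot ζ m) {a : K} (ha : a ≠ 0)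
    (hp : ∀ p : ℕ, p.Prime → p ∣ m → ∀ b : K, b ^ p ≠ a) :
    Irreducible (X ^ m - C a : K[X]) := by
  have : NeZero m := ⟨hm.ne'⟩
  let L := AlgebraicClosure K
  let φ : K →+* L := algebraMap K L
  obtain ⟨α, hα⟩ := IsAlgClosed.exists_pow_nat_eq (algebraMap K L a) hm
  have hint : IsIntegral K α :=
    ⟨X ^ m - C a, monic_X_pow_sub_C a hm.ne', by simp [hα]⟩
  set q := minpoly K α with hqdef
  have hqmonic : q.Monic := minpoly.monic hint
  have hqdvd : q ∣ X ^ m - C a := minpoly.dvd _ _ (by simp [hα])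
  set r := q.natDegree with hr
  have hrm : r ≤ m := by
    have := Polynomial.natDegree_le_of_dvd hqdvd (X_pow_sub_C_ne_zero hm a)
    simpa [natDegree_X_pow_sub_C] using this
  have hrpos : 0 < r := minpoly.natDegree_pos hint
  -- key computation: `((-1)^r * q.coeff 0) ^ m = a ^ r`
  have hu : ((-1 : K) ^ r * q.coeff 0) ^ m = a ^ r := by
    have hsplit : (q.map φ).Splits := IsAlgClosed.splits (q.map φ)
    have hmonL : (q.map φ).Monic := hqmonic.map φ
    have hcard : Multiset.card (q.map φ).roots = r := by
      rw [splits_iff_card_roots.mp hsplit, hqmonic.natDegree_map]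
    have hroots : ∀ β ∈ (q.map φ).roots, β ^ m = φ a := by
      intro β hβ
      have hβroot : IsRoot (q.map φ) β := isRoot_of_mem_roots hβ
      have hdvd' : q.map φ ∣ (X ^ m - C a).map φ := Polynomial.map_dvd φ hqdvd
      have : IsRoot ((X ^ m - C a).map φ) β := hβroot.dvd hdvd'
      simpa [Polynomial.map_sub, Polynomial.map_pow, sub_eq_zero, eval_sub, eval_pow,
        IsRoot] using this
    have hprodpow : (q.map φ).roots.prod ^ m = (φ a) ^ r := by
      have hstep := Multiset.prod_hom (q.map φ).roots (powMonoidHom m : L →* L)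
      simp only [powMonoidHom_apply] at hstep
      rw [← hstep, Multiset.map_congr rfl hroots]
      simp [hcard, Multiset.map_const', Multiset.prod_replicate]
    have hc0 : (q.map φ).coeff 0 = (-1) ^ r * (q.map φ).roots.prod := by
      have := hsplit.coeff_zero_eq_prod_roots_of_monic hmonL
      rwa [hqmonic.natDegree_map] at this
    have h1 : φ (q.coeff 0) = (-1) ^ r * (q.map φ).roots.prod := by
      rw [← coeff_map, hc0]
    have h2 : (q.map φ).roots.prod = (-1 : L) ^ r * φ (q.coeff 0) := by
      rw [h1, ← mul_assoc, ← pow_add, ← two_mul, pow_mul, neg_one_sq, one_pow, one_mul]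
    have key : φ (((-1 : K) ^ r * q.coeff 0) ^ m) = φ (a ^ r) := by
      calc φ (((-1 : K) ^ r * q.coeff 0) ^ m)
          = ((-1 : L) ^ r * φ (q.coeff 0)) ^ m := by
            rw [map_pow, map_mul, map_pow, map_neg, map_one]
        _ = (q.map φ).roots.prod ^ m := by rw [← h2]
        _ = (φ a) ^ r := hprodpow
        _ = φ (a ^ r) := by rw [map_pow]
    exact φ.injective key
  set u : K := (-1 : K) ^ r * q.coeff 0 with hudef
  have hu0 : u ≠ 0 := by
    intro h
    apply pow_ne_zero r ha
    rw [← hu, h, zero_pow hm.ne']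
  -- show `r = m`
  have hreq : r = m := by
    by_contra hne
    have hrlt : r < m := lt_of_le_of_ne hrm hne
    set U : Kˣ := Units.mk0 u hu0 with hUdef
    set A : Kˣ := Units.mk0 a ha with hAdef
    have hUA : U ^ m = A ^ r := by
      ext; push_cast [Units.val_pow_eq_pow_val]; exact hu
    set e : ℕ := Nat.gcd r m with hedef
    have hepos : 0 < e := Nat.gcd_pos_of_pos_left m hrpos
    have her : e ∣ r := Nat.gcd_dvd_left r m
    have hem : e ∣ m := Nat.gcd_dvd_right r m
    set W : Kˣ := U ^ (Nat.gcdA r m) * A ^ (Nat.gcdB r m) with hWdef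
    have hUm : U ^ (m : ℤ) = A ^ (r : ℤ) := by
      rw [zpow_natCast, zpow_natCast, hUA]
    have comm : ∀ (B : Kˣ) (x : ℤ), (B ^ x) ^ (m : ℤ) = (B ^ (m : ℤ)) ^ x := fun B x => by
      rw [← zpow_mul, mul_comm, zpow_mul]
    have hW : W ^ (m : ℤ) = A ^ (e : ℤ) := by
      rw [hWdef, mul_zpow, comm U, comm A, hUm, ← zpow_mul, ← zpow_mul, ← zpow_add]
      congr 1
      rw [hedef]
      exact_mod_cast (Nat.gcd_eq_gcd_ab r m).symm
    have hWm : W ^ m = A ^ e := by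
      have := hW
      rwa [zpow_natCast, zpow_natCast] at this
    have helt : e < m := lt_of_le_of_lt (Nat.le_of_dvd hrpos her) hrlt
    obtain ⟨k, hk⟩ := hem
    have hk1 : k ≠ 1 := by rintro rfl; simp at hk; omega
    obtain ⟨p, hpprime, ⟨s, hs⟩⟩ := Nat.exists_prime_and_dvd hk1
    set θ : Kˣ := A * (W ^ k)⁻¹ with hθdef
    have hθe : θ ^ e = 1 := by
      rw [hθdef, mul_pow, inv_pow, ← pow_mul, mul_comm k e, ← hk, hWm, mul_inv_cancel]
    have hθm' : θ ^ m = 1 := by rw [hk, pow_mul, hθe, one_pow]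
    have hθm : (θ : K) ^ m = 1 := by
      rw [← Units.val_pow_eq_pow_val, hθm', Units.val_one]
    obtain ⟨i, hilt, hiθ⟩ := hζ.eq_pow_of_pow_eq_one hθm
    have hie : ζ ^ (i * e) = 1 := by
      rw [pow_mul, hiθ, ← Units.val_pow_eq_pow_val, hθe, Units.val_one]
    have hmie : m ∣ i * e := (hζ.pow_eq_one_iff_dvd _).mp hie
    have hki : k ∣ i := by
      obtain ⟨t, ht⟩ := hmie
      refine ⟨t, ?_⟩
      have heq : e * i = e * (k * t) := by
        calc e * i = i * e := mul_comm e i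
          _ = m * t := ht
          _ = e * k * t := by rw [hk]
          _ = e * (k * t) := by ring
      exact Nat.eq_of_mul_eq_mul_left hepos heq
    obtain ⟨t, ht⟩ := hki
    have hθpow : (θ : K) = (ζ ^ (s * t)) ^ p := by
      rw [← hiθ, ht, hs, ← pow_mul, show s * t * p = p * s * t by ring]
    have hAθ : θ * W ^ k = A := by rw [hθdef]; exact inv_mul_cancel_right A (W ^ k)
    refine hp p hpprime ⟨e * s, by rw [hk, hs]; ring⟩ (ζ ^ (s * t) * ((W ^ s : Kˣ) : K)) ?_
    calc (ζ ^ (s * t) * ((W ^ s : Kˣ) : K)) ^ p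
        = (ζ ^ (s * t)) ^ p * (((W ^ s : Kˣ) : K)) ^ p := mul_pow _ _ _
      _ = (θ : K) * ((W ^ k : Kˣ) : K) := by
          rw [← hθpow, ← Units.val_pow_eq_pow_val, ← pow_mul,
            show s * p = k by rw [hs]; ring]
      _ = ((θ * W ^ k : Kˣ) : K) := by push_cast; ring
      _ = a := by rw [hAθ]; simp [hAdef]
  -- conclude
  have hEq : X ^ m - C a = q :=
    eq_of_monic_of_dvd_of_natDegree_le hqmonic (monic_X_pow_sub_C a hm.ne') hqdvd
      (by rw [natDegree_X_pow_sub_C]; exact hreq.ge)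
  rw [hEq]
  exact minpoly.irreducible hint

theorem stmt_6 (K : Type*) [Field K] (n : ℕ) (hn : 0 < n)
    (hchar : ¬ (ringChar K ∣ n)) (hμ : ∃ ζ : K, IsPrimitiveRoot ζ n)
    (hy : ∃ y : K, y ^ 4 = -4)
    (f : K) (hf : f ≠ 0) (d : ℕ) (hd : d ∣ n) (g : K) (hg : g ^ d = f)
    (hmax : ∀ e : ℕ, e ∣ n → (∃ h : K, h ^ e = f) → e ≤ d)
    (n' : ℕ) (hn' : n = d * n') :
    (X ^ n - C f : K[X]) =
        ((Polynomial.nthRoots d (1 : K)).map (fun ζ => X ^ n' - C (ζ * g))).prod ∧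
      (∀ ζ ∈ Polynomial.nthRoots d (1 : K), Irreducible (X ^ n' - C (ζ * g) : K[X])) ∧
      ((Polynomial.nthRoots d (1 : K)).map (fun ζ => X ^ n' - C (ζ * g))).Nodup := by
  obtain ⟨ζ, hζ⟩ := hμ
  have hd0 : 0 < d := Nat.pos_of_dvd_of_pos hd hn
  have hn'0 : 0 < n' := by
    rcases Nat.eq_zero_or_pos n' with h | h
    · rw [h, mul_zero] at hn'; omega
    · exact h
  have hζd : IsPrimitiveRoot (ζ ^ n') d := hζ.pow hn (by rw [hn', mul_comm])
  have hζn' : IsPrimitiveRoot (ζ ^ d) n' := hζ.pow hn hn'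
  have hg0 : g ≠ 0 := by
    intro h; apply hf; rw [← hg, h, zero_pow hd0.ne']
  refine ⟨?_, ?_, ?_⟩
  · -- product formula
    rw [hζd.nthRoots_eq (one_pow d), Multiset.map_map]
    have h1 : (X ^ d - C f : K[X]) = ∏ i ∈ Finset.range d, (X - C ((ζ ^ n') ^ i * g)) :=
      X_pow_sub_C_eq_prod hζd hd0 hg
    have h2 := congrArg (fun P : K[X] => P.comp (X ^ n')) h1
    simp only [sub_comp, pow_comp, X_comp, C_comp, prod_comp, ← pow_mul] at h2
    rw [show n' * d = n by rw [hn']; ring] at h2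
    rw [h2, Finset.prod_eq_multiset_prod]
    simp only [Finset.range_val]
    apply congrArg Multiset.prod
    apply Multiset.map_congr rfl
    intro i _
    simp only [Function.comp_apply, mul_one, pow_mul]
  · -- irreducibility
    intro z hz
    have hz1 : z ^ d = 1 := (mem_nthRoots hd0).mp hz
    have hz0 : z ≠ 0 := by
      intro h; rw [h, zero_pow hd0.ne'] at hz1; exact zero_ne_one hz1
    refine aux_X_pow_sub_C_irreducible hn'0 hζn' (mul_ne_zero hz0 hg0) ?_
    intro p hpprime hpn' b hb
    obtain ⟨s, hs⟩ := hpn'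
    have hfb : b ^ (p * d) = f := by
      rw [pow_mul, hb, mul_pow, hz1, one_mul, hg]
    have hpd : p * d ∣ n := ⟨s, by rw [hn', hs]; ring⟩
    have := hmax (p * d) hpd ⟨b, hfb⟩
    nlinarith [hpprime.two_le, hd0]
  · -- nodup
    refine Multiset.Nodup.map ?_ hζd.nthRoots_one_nodup
    intro z₁ z₂ h
    have h' : C (z₁ * g) = C (z₂ * g) := sub_right_inj.mp h
    exact mul_right_cancel₀ hg0 (C_inj.mp h')
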